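/- If V̄ is K-Lipschitz-valued, then ∫ |V(s) − V̄(φ(s))| dξ(s) ≤ (L_R + γ K L_P)/(1−γ). -/

import Mathlib

open MeasureTheory ProbabilityTheory

/-- Total variation distance between two measures on `X`:
the supremum over measurable sets of the absolute difference of their masses. -/
noncomputable def tvDist {X : Type*} [MeasurableSpace X] (μ ν : Measure X) : ℝ :=
  ⨆ A : {A : Set X // MeasurableSet A}, |(μ A.1).toReal - (ν A.1).toReal|

lemma bdd_integrable {α : Type*} [MeasurableSpace α] {μ : Measure α} [IsFiniteMeasure μ]
    {f : α → ℝ} (hf : AEStronglyMeasurable f μ) {C : ℝ} (h : ∀ a, |f a| ≤ C) :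
    Integrable f μ :=
  (integrable_const C).mono' hf (ae_of_all _ (fun a => by simpa [Real.norm_eq_abs] using h a))

lemma measure_finset_toReal {α : Type*} [MeasurableSpace α] [MeasurableSingletonClass α]
    (μ : Measure α) [IsFiniteMeasure μ] (B : Finset α) :
    (μ (↑B : Set α)).toReal = ∑ x ∈ B, (μ {x}).toReal := by
  rw [← ENNReal.toReal_sum (fun x _ => measure_ne_top μ _)]
  congr 1
  rw [← measure_biUnion_finset
    (fun x _ y _ hxy => by simpa using Set.disjoint_singleton.2 hxy)
    (fun x _ => measurableSet_singleton x)]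
  congr 1
  ext a
  simp

lemma sum_measure_singleton_toReal {α : Type*} [Fintype α] [MeasurableSpace α]
    [MeasurableSingletonClass α] (μ : Measure α) [IsProbabilityMeasure μ] :
    ∑ x, (μ {x}).toReal = 1 := by
  rw [← measure_finset_toReal μ Finset.univ]
  simp

lemma tvDist_bddAbove {X : Type*} [MeasurableSpace X] (μ ν : Measure X)
    [IsProbabilityMeasure μ] [IsProbabilityMeasure ν] :
    BddAbove (Set.range fun A : {A : Set X // MeasurableSet A} =>
      |(μ A.1).toReal - (ν A.1).toReal|) := by
  refine ⟨1, ?_⟩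
  rintro x ⟨B, rfl⟩
  have h1 : (μ B.1).toReal ≤ 1 := by
    have := prob_le_one (μ := μ) (s := B.1)
    simpa using ENNReal.toReal_mono ENNReal.one_ne_top this
  have h2 : (ν B.1).toReal ≤ 1 := by
    have := prob_le_one (μ := ν) (s := B.1)
    simpa using ENNReal.toReal_mono ENNReal.one_ne_top this
  have h3 := ENNReal.toReal_nonneg (a := μ B.1)
  have h4 := ENNReal.toReal_nonneg (a := ν B.1)
  rw [abs_le]
  constructor <;> linarith

lemma abs_diff_le_tvDist {X : Type*} [MeasurableSpace X] (μ ν : Measure X)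
    [IsProbabilityMeasure μ] [IsProbabilityMeasure ν] {A : Set X} (hA : MeasurableSet A) :
    |(μ A).toReal - (ν A).toReal| ≤ tvDist μ ν :=
  le_ciSup (tvDist_bddAbove μ ν) (⟨A, hA⟩ : {A : Set X // MeasurableSet A})

lemma tvDist_nonneg {X : Type*} [MeasurableSpace X] (μ ν : Measure X)
    [IsProbabilityMeasure μ] [IsProbabilityMeasure ν] : 0 ≤ tvDist μ ν := by
  have := abs_diff_le_tvDist μ ν MeasurableSet.empty
  simpa using this

lemma tvDist_le_one {X : Type*} [MeasurableSpace X] (μ ν : Measure X)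
    [IsProbabilityMeasure μ] [IsProbabilityMeasure ν] : tvDist μ ν ≤ 1 := by
  refine ciSup_le fun B => ?_
  have h1 : (μ B.1).toReal ≤ 1 := by
    have := prob_le_one (μ := μ) (s := B.1)
    simpa using ENNReal.toReal_mono ENNReal.one_ne_top this
  have h2 : (ν B.1).toReal ≤ 1 := by
    have := prob_le_one (μ := ν) (s := B.1)
    simpa using ENNReal.toReal_mono ENNReal.one_ne_top this
  have h3 := ENNReal.toReal_nonneg (a := μ B.1)
  have h4 := ENNReal.toReal_nonneg (a := ν B.1)
  rw [abs_le]
  constructor <;> linarith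

/-- On a finite space, the difference of integrals of a `K`-Lipschitz-valued (for the discrete
metric) function against two probability measures is bounded by `K` times total variation. -/
lemma abs_integral_sub_le_tvDist {Sb : Type*} [Fintype Sb] [Nonempty Sb] [MeasurableSpace Sb]
    [MeasurableSingletonClass Sb] (μ ν : Measure Sb) [IsProbabilityMeasure μ]
    [IsProbabilityMeasure ν] (f : Sb → ℝ) {K : ℝ} (hK : ∀ x y, |f x - f y| ≤ K) :
    |∫ x, f x ∂μ - ∫ x, f x ∂ν| ≤ K * tvDist μ ν := by
  classical
  obtain ⟨y0, -, hy0⟩ := Finset.exists_min_image Finset.univ f ⟨Classical.arbitrary Sb,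
    Finset.mem_univ _⟩
  set d : Sb → ℝ := fun x => (μ {x}).toReal - (ν {x}).toReal with hd
  set g : Sb → ℝ := fun x => f x - f y0 with hgdef
  have hg0 : ∀ x, 0 ≤ g x := fun x => sub_nonneg.2 (hy0 x (Finset.mem_univ x))
  have hgK : ∀ x, g x ≤ K := fun x => (abs_le.1 (hK x y0)).2
  have hK0 : 0 ≤ K := le_trans (abs_nonneg _) (hK y0 y0)
  have hsumd : ∑ x, d x = 0 := by
    simp [hd, Finset.sum_sub_distrib, sum_measure_singleton_toReal]
  have hint : ∫ x, f x ∂μ - ∫ x, f x ∂ν = ∑ x, d x * f x := by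
    rw [integral_fintype _, integral_fintype _]
    simp [hd, measureReal_def, sub_mul, Finset.sum_sub_distrib, smul_eq_mul]
    all_goals exact .of_finite
  have hrw : ∑ x, d x * f x = ∑ x, d x * g x := by
    simp only [hgdef, mul_sub, Finset.sum_sub_distrib, ← Finset.sum_mul, hsumd, zero_mul, sub_zero]
  set A : Finset Sb := Finset.univ.filter (fun x => 0 ≤ d x) with hA
  set Ac : Finset Sb := Finset.univ.filter (fun x => ¬ 0 ≤ d x) with hAc
  have hsplit : ∀ h : Sb → ℝ, ∑ x, h x = ∑ x ∈ A, h x + ∑ x ∈ Ac, h x := fun h =>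
    (Finset.sum_filter_add_sum_filter_not Finset.univ _ h).symm
  have hdA : ∑ x ∈ A, d x = (μ (↑A : Set Sb)).toReal - (ν (↑A : Set Sb)).toReal := by
    simp [hd, measure_finset_toReal, Finset.sum_sub_distrib]
  have hdAc : ∑ x ∈ Ac, d x = (μ (↑Ac : Set Sb)).toReal - (ν (↑Ac : Set Sb)).toReal := by
    simp [hd, measure_finset_toReal, Finset.sum_sub_distrib]
  have hAmeas : MeasurableSet (↑A : Set Sb) := (Set.toFinite _).measurableSet
  have hAcmeas : MeasurableSet (↑Ac : Set Sb) := (Set.toFinite _).measurableSet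
  have htvA : |(μ (↑A : Set Sb)).toReal - (ν (↑A : Set Sb)).toReal| ≤ tvDist μ ν :=
    abs_diff_le_tvDist μ ν hAmeas
  have htvAc : |(μ (↑Ac : Set Sb)).toReal - (ν (↑Ac : Set Sb)).toReal| ≤ tvDist μ ν :=
    abs_diff_le_tvDist μ ν hAcmeas
  have hup : ∑ x, d x * g x ≤ K * tvDist μ ν := by
    rw [hsplit (fun x => d x * g x)]
    have h1 : ∑ x ∈ A, d x * g x ≤ ∑ x ∈ A, d x * K := by
      refine Finset.sum_le_sum fun x hx => ?_
      have hdx : 0 ≤ d x := (Finset.mem_filter.1 hx).2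
      exact mul_le_mul_of_nonneg_left (hgK x) hdx
    have h2 : ∑ x ∈ Ac, d x * g x ≤ 0 := by
      refine Finset.sum_nonpos fun x hx => ?_
      have hdx : d x < 0 := lt_of_not_ge (Finset.mem_filter.1 hx).2
      exact mul_nonpos_of_nonpos_of_nonneg hdx.le (hg0 x)
    have h3 : ∑ x ∈ A, d x * K = K * ((μ (↑A : Set Sb)).toReal - (ν (↑A : Set Sb)).toReal) := by
      rw [← Finset.sum_mul, hdA, mul_comm]
    have h4 : K * ((μ (↑A : Set Sb)).toReal - (ν (↑A : Set Sb)).toReal) ≤ K * tvDist μ ν :=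
      mul_le_mul_of_nonneg_left (le_trans (le_abs_self _) htvA) hK0
    linarith
  have hlo : -(K * tvDist μ ν) ≤ ∑ x, d x * g x := by
    rw [hsplit (fun x => d x * g x)]
    have h1 : ∑ x ∈ A, (0:ℝ) ≤ ∑ x ∈ A, d x * g x := by
      refine Finset.sum_le_sum fun x hx => ?_
      exact mul_nonneg (Finset.mem_filter.1 hx).2 (hg0 x)
    have h2 : ∑ x ∈ Ac, d x * K ≤ ∑ x ∈ Ac, d x * g x := by
      refine Finset.sum_le_sum fun x hx => ?_
      have hdx : d x ≤ 0 := (lt_of_not_ge (Finset.mem_filter.1 hx).2).le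
      exact mul_le_mul_of_nonpos_left (hgK x) hdx
    have h3 : ∑ x ∈ Ac, d x * K = K * ((μ (↑Ac : Set Sb)).toReal - (ν (↑Ac : Set Sb)).toReal) := by
      rw [← Finset.sum_mul, hdAc, mul_comm]
    have h4 : -(K * tvDist μ ν) ≤ K * ((μ (↑Ac : Set Sb)).toReal - (ν (↑Ac : Set Sb)).toReal) := by
      have h5 : -(tvDist μ ν) ≤ (μ (↑Ac : Set Sb)).toReal - (ν (↑Ac : Set Sb)).toReal :=
        (abs_le.1 htvAc).1
      calc -(K * tvDist μ ν) = K * (-(tvDist μ ν)) := by ring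
        _ ≤ K * ((μ (↑Ac : Set Sb)).toReal - (ν (↑Ac : Set Sb)).toReal) :=
            mul_le_mul_of_nonneg_left h5 hK0
    simp only [Finset.sum_const, smul_zero] at h1
    linarith
  rw [hint, hrw, abs_le]
  exact ⟨hlo, hup⟩

lemma ciSup_eq_sup' {ι : Type*} [Fintype ι] [Nonempty ι] (f : ι → ℝ) :
    ⨆ i, f i = Finset.univ.sup' Finset.univ_nonempty f := by
  refine le_antisymm (ciSup_le fun i => Finset.le_sup' f (Finset.mem_univ i))
    (Finset.sup'_le _ _ fun i _ => le_ciSup (Set.Finite.bddAbove (Set.finite_range f)) i)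

lemma measurable_ciSup_fintype {ι : Type*} [Fintype ι] [Nonempty ι] {α : Type*}
    [MeasurableSpace α] (f : ι → α → ℝ) (hf : ∀ i, Measurable (f i)) :
    Measurable (fun a => ⨆ i, f i a) := by
  have : (fun a => ⨆ i, f i a)
      = fun a => Finset.univ.sup' Finset.univ_nonempty (fun i => f i a) := by
    funext a
    exact ciSup_eq_sup' _
  rw [this]
  have := Finset.measurable_sup' (Finset.univ_nonempty (α := ι)) (fun i _ => hf i)
  convert this using 1
  funext a
  rw [Finset.sup'_apply]

/-- Value-difference bound for discounted return: if the latent value function `Vb` is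
`K`-Lipschitz-valued for the discrete metric on the latent space, then the expected (under the
stationary distribution `ξ`) absolute difference between the ground value function `V` and
`Vb ∘ φ` is at most `(L_R + γ·K·L_P)/(1-γ)`, where `L_R` and `L_P` are the local reward and
transition losses. -/
theorem value_difference_return
    {S : Type*} [MeasurableSpace S]
    {Sb : Type*} [Fintype Sb] [Nonempty Sb] [MeasurableSpace Sb] [DiscreteMeasurableSpace Sb]
    (P : Kernel S S) [IsMarkovKernel P]
    (Pb : Sb → PMF Sb)
    (φ : S → Sb) (hφ : Measurable φ)
    (ξ : Measure S) [IsProbabilityMeasure ξ]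
    (hinv : ∀ A : Set S, MeasurableSet A → ξ A = ∫⁻ s, P s A ∂ξ)
    (γ : ℝ) (hγ0 : 0 ≤ γ) (hγ1 : γ < 1)
    (r : S → ℝ) (hrmeas : Measurable r) (hrbdd : ∃ C, ∀ s, |r s| ≤ C)
    (rb : Sb → ℝ)
    (V : S → ℝ) (hVmeas : Measurable V) (hVbdd : ∃ C, ∀ s, |V s| ≤ C)
    (hVbellman : ∀ s, V s = r s + γ * ∫ s', V s' ∂(P s))
    (Vb : Sb → ℝ)
    (hVbbellman : ∀ x, Vb x = rb x + γ * ∑ y, ((Pb x) y).toReal * Vb y)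
    (K : ℝ) (hK : ∀ x y, |Vb x - Vb y| ≤ K) :
    ∫ s, |V s - Vb (φ s)| ∂ξ ≤
      ((∫ s, |r s - rb (φ s)| ∂ξ) +
        γ * K * (∫ s, tvDist ((P s).map φ) ((Pb (φ s)).toMeasure) ∂ξ)) / (1 - γ) := by
  classical
  obtain ⟨CV, hCV⟩ := hVbdd
  obtain ⟨CR, hCR⟩ := hrbdd
  obtain ⟨xB, -, hxB⟩ := Finset.exists_max_image Finset.univ (fun x => |Vb x|)
    ⟨Classical.arbitrary Sb, Finset.mem_univ _⟩
  set CB : ℝ := |Vb xB| with hCBdef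
  have hCB : ∀ x, |Vb x| ≤ CB := fun x => hxB x (Finset.mem_univ x)
  obtain ⟨xR, -, hxR⟩ := Finset.exists_max_image Finset.univ (fun x => |rb x|)
    ⟨Classical.arbitrary Sb, Finset.mem_univ _⟩
  set CRb : ℝ := |rb xR| with hCRbdef
  have hCRb : ∀ x, |rb x| ≤ CRb := fun x => hxR x (Finset.mem_univ x)
  -- probability measure instances
  haveI hinstmap : ∀ s, IsProbabilityMeasure ((P s).map φ) := fun s =>
    Measure.isProbabilityMeasure_map hφ.aemeasurable
  -- basic measurability
  have hVbφ : Measurable (fun s => Vb (φ s)) := Measurable.of_discrete.comp hφ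
  have hrbφ : Measurable (fun s => rb (φ s)) := Measurable.of_discrete.comp hφ
  set g : S → ℝ := fun s => |V s - Vb (φ s)| with hgdef
  have hg : Measurable g := (hVmeas.sub hVbφ).abs
  have hgbd : ∀ s, |g s| ≤ CV + CB := by
    intro s
    rw [abs_abs]
    exact le_trans (abs_sub _ _) (add_le_add (hCV s) (hCB (φ s)))
  have hg0 : ∀ s, 0 ≤ g s := fun s => abs_nonneg _
  set tv : S → ℝ := fun s => tvDist ((P s).map φ) ((Pb (φ s)).toMeasure) with htvdef
  -- measurability of tv
  have htv_meas : Measurable tv := by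
    apply measurable_ciSup_fintype
    intro A
    have h1 : Measurable fun s => ((P s).map φ A.1).toReal := by
      have heq : ∀ s, ((P s).map φ) A.1 = P s (φ ⁻¹' A.1) := fun s => Measure.map_apply hφ A.2
      simp only [heq]
      exact (Kernel.measurable_coe P (hφ A.2)).ennreal_toReal
    have h2 : Measurable fun s => (((Pb (φ s)).toMeasure A.1)).toReal :=
      (Measurable.of_discrete (f := fun x : Sb => ((Pb x).toMeasure A.1).toReal)).comp hφ
    exact (h1.sub h2).abs
  have htv0 : ∀ s, 0 ≤ tv s := fun s => tvDist_nonneg _ _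
  have htv1 : ∀ s, tv s ≤ 1 := fun s => tvDist_le_one _ _
  have hK0 : 0 ≤ K := le_trans (abs_nonneg _) (hK (Classical.arbitrary Sb) (Classical.arbitrary Sb))
  -- W
  set W' : S → ENNReal := fun s => ∫⁻ s', ENNReal.ofReal (g s') ∂(P s) with hW'def
  have hW'meas : Measurable W' := Measurable.lintegral_kernel hg.ennreal_ofReal
  have hW'bd : ∀ s, W' s ≤ ENNReal.ofReal (CV + CB) := by
    intro s
    calc W' s ≤ ∫⁻ _, ENNReal.ofReal (CV + CB) ∂(P s) :=
          lintegral_mono fun s' => ENNReal.ofReal_le_ofReal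
            (le_trans (le_abs_self _) (hgbd s'))
      _ = ENNReal.ofReal (CV + CB) := by simp
  have hW'lt : ∀ s, W' s < ⊤ := fun s => lt_of_le_of_lt (hW'bd s) ENNReal.ofReal_lt_top
  set W : S → ℝ := fun s => (W' s).toReal with hWdef
  have hWmeas : Measurable W := hW'meas.ennreal_toReal
  have hWeq : ∀ s, W s = ∫ s', g s' ∂(P s) := by
    intro s
    rw [integral_eq_lintegral_of_nonneg_ae (ae_of_all _ hg0) hg.aestronglyMeasurable]
  have hSne : Nonempty S := by
    by_contra h
    rw [not_nonempty_iff] at h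
    have h1 : (ξ Set.univ) = 0 := by
      rw [Set.univ_eq_empty_iff.2 h]
      exact measure_empty
    rw [measure_univ] at h1
    exact one_ne_zero h1
  have hCV0 : 0 ≤ CV := le_trans (abs_nonneg _) (hCV (Classical.arbitrary S))
  have hCB0 : 0 ≤ CB := abs_nonneg _
  have hWbd : ∀ s, |W s| ≤ CV + CB := by
    intro s
    rw [abs_of_nonneg ENNReal.toReal_nonneg]
    exact ENNReal.toReal_le_of_le_ofReal (by linarith) (hW'bd s)
  -- sum over latent space as integral against PMF measure
  have hsum_eq : ∀ x : Sb, ∫ y, Vb y ∂(Pb x).toMeasure = ∑ y, ((Pb x) y).toReal * Vb y := by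
    intro x
    rw [integral_fintype _]
    refine Finset.sum_congr rfl fun y _ => ?_
    rw [measureReal_def, PMF.toMeasure_apply_singleton _ _ (measurableSet_singleton y), smul_eq_mul]
    exact .of_finite
  -- pointwise bound
  have hpt : ∀ s, g s ≤ |r s - rb (φ s)| + γ * W s + (γ * K) * tv s := by
    intro s
    have hintV : Integrable V (P s) := bdd_integrable hVmeas.aestronglyMeasurable hCV
    have hintVb : Integrable (fun s' => Vb (φ s')) (P s) :=
      bdd_integrable hVbφ.aestronglyMeasurable (fun s' => hCB (φ s'))
    have hmap : ∫ y, Vb y ∂((P s).map φ) = ∫ s', Vb (φ s') ∂(P s) :=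
      integral_map hφ.aemeasurable
        (Measurable.of_discrete (f := Vb)).aestronglyMeasurable
    have hdiff : V s - Vb (φ s) = (r s - rb (φ s))
        + γ * ((∫ s', V s' ∂(P s)) - ∫ s', Vb (φ s') ∂(P s))
        + γ * ((∫ y, Vb y ∂((P s).map φ)) - ∫ y, Vb y ∂(Pb (φ s)).toMeasure) := by
      rw [hVbellman s, hVbbellman (φ s), ← hsum_eq (φ s), hmap]
      ring
    have hT1 : |(∫ s', V s' ∂(P s)) - ∫ s', Vb (φ s') ∂(P s)| ≤ W s := by
      rw [← integral_sub hintV hintVb, hWeq s]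
      calc |∫ s', (V s' - Vb (φ s')) ∂(P s)| = ‖∫ s', (V s' - Vb (φ s')) ∂(P s)‖ :=
            (Real.norm_eq_abs _).symm
        _ ≤ ∫ s', ‖V s' - Vb (φ s')‖ ∂(P s) := norm_integral_le_integral_norm _
        _ = ∫ s', g s' ∂(P s) := by
            refine integral_congr_ae (ae_of_all _ fun s' => ?_)
            simp [Real.norm_eq_abs, hgdef]
    have hT2 : |(∫ y, Vb y ∂((P s).map φ)) - ∫ y, Vb y ∂(Pb (φ s)).toMeasure| ≤ K * tv s :=
      abs_integral_sub_le_tvDist _ _ Vb hK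
    calc g s = |V s - Vb (φ s)| := rfl
      _ ≤ |r s - rb (φ s)|
          + |γ * ((∫ s', V s' ∂(P s)) - ∫ s', Vb (φ s') ∂(P s))|
          + |γ * ((∫ y, Vb y ∂((P s).map φ)) - ∫ y, Vb y ∂(Pb (φ s)).toMeasure)| := by
            rw [hdiff]
            exact le_trans (abs_add_le _ _) (add_le_add_left (abs_add_le _ _) _)
      _ ≤ |r s - rb (φ s)| + γ * W s + (γ * K) * tv s := by
            rw [abs_mul, abs_mul, abs_of_nonneg hγ0]
            have h1 := mul_le_mul_of_nonneg_left hT1 hγ0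
            have h2 := mul_le_mul_of_nonneg_left hT2 hγ0
            rw [← mul_assoc] at h2
            linarith
  -- integrability
  have hint_g : Integrable g ξ := bdd_integrable hg.aestronglyMeasurable hgbd
  have hint_r : Integrable (fun s => |r s - rb (φ s)|) ξ := by
    refine bdd_integrable (hrmeas.sub hrbφ).abs.aestronglyMeasurable (C := CR + CRb) fun s => ?_
    rw [abs_abs]
    calc |r s - rb (φ s)| ≤ |r s| + |rb (φ s)| := by
          have := abs_add_le (r s) (-(rb (φ s)))
          simpa [sub_eq_add_neg] using this
      _ ≤ CR + CRb := add_le_add (hCR s) (hCRb (φ s))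
  have hint_W : Integrable W ξ := bdd_integrable hWmeas.aestronglyMeasurable hWbd
  have hint_tv : Integrable tv ξ := by
    refine bdd_integrable htv_meas.aestronglyMeasurable (C := 1) fun s => ?_
    rw [abs_of_nonneg (htv0 s)]
    exact htv1 s
  -- integrate the pointwise bound
  have hDle : ∫ s, g s ∂ξ ≤ (∫ s, |r s - rb (φ s)| ∂ξ) + γ * (∫ s, W s ∂ξ)
      + (γ * K) * (∫ s, tv s ∂ξ) := by
    calc ∫ s, g s ∂ξ
        ≤ ∫ s, (|r s - rb (φ s)| + γ * W s + (γ * K) * tv s) ∂ξ := by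
          refine integral_mono hint_g ?_ hpt
          exact (hint_r.add (hint_W.const_mul γ)).add (hint_tv.const_mul (γ * K))
      _ = (∫ s, |r s - rb (φ s)| ∂ξ) + γ * (∫ s, W s ∂ξ) + (γ * K) * (∫ s, tv s ∂ξ) := by
          have e1 : Integrable (fun s => |r s - rb (φ s)| + γ * W s) ξ := by
            exact hint_r.add (hint_W.const_mul γ)
          have e2 : Integrable (fun s => (γ * K) * tv s) ξ := by
            exact hint_tv.const_mul (γ * K)
          have e3 : Integrable (fun s => γ * W s) ξ := by
            exact hint_W.const_mul γ
          rw [integral_add e1 e2, integral_add hint_r e3, MeasureTheory.integral_const_mul, MeasureTheory.integral_const_mul]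
  -- stationarity: ∫ W dξ = ∫ g dξ
  have hWint : ∫ s, W s ∂ξ = ∫ s, g s ∂ξ := by
    have hbind : ξ = ξ.bind (fun s => P s) := by
      ext A hA
      rw [Measure.bind_apply hA (P.measurable.aemeasurable)]
      exact hinv A hA
    have h1 : ∫ s, W s ∂ξ = (∫⁻ s, W' s ∂ξ).toReal :=
      integral_toReal hW'meas.aemeasurable (ae_of_all _ hW'lt)
    have h2 : ∫⁻ s, W' s ∂ξ = ∫⁻ s, ENNReal.ofReal (g s) ∂ξ := by
      conv_rhs => rw [hbind]
      rw [Measure.lintegral_bind P.measurable.aemeasurable hg.ennreal_ofReal.aemeasurable]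
    have h3 : ∫ s, g s ∂ξ = (∫⁻ s, ENNReal.ofReal (g s) ∂ξ).toReal :=
      integral_eq_lintegral_of_nonneg_ae (ae_of_all _ hg0) hg.aestronglyMeasurable
    rw [h1, h2, ← h3]
  -- conclude
  have hγpos : (0:ℝ) < 1 - γ := by linarith
  rw [le_div_iff₀ hγpos]
  have hD := hDle
  rw [hWint] at hD
  have hgoal : (∫ s, g s ∂ξ) * (1 - γ) ≤ (∫ s, |r s - rb (φ s)| ∂ξ)
      + γ * K * (∫ s, tv s ∂ξ) := by nlinarith [hD]
  calc (∫ s, |V s - Vb (φ s)| ∂ξ) * (1 - γ) = (∫ s, g s ∂ξ) * (1 - γ) := rfl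
    _ ≤ (∫ s, |r s - rb (φ s)| ∂ξ) + γ * K * (∫ s, tv s ∂ξ) := hgoal
    _ = (∫ s, |r s - rb (φ s)| ∂ξ)
        + γ * K * (∫ s, tvDist ((P s).map φ) ((Pb (φ s)).toMeasure) ∂ξ) := rfl
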